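/- Let D be a GCD domain with fraction field K and let A ∈ D^{n×n} admit a permutation-free LD⁻¹U decomposition A = L · D_g^{−1} · U. Using the convention L_{0,0} = U_{0,0} = 1, for every k with 2 ≤ k ≤ n−1 the following hold: (i) gcd(L_{k−1,k−1}, L_{k,k−1}) divides gcd(L_{k−1,k−1}, L_{k,k−1}, L_{k−2,k−2}) · U_{k,j} for every j with 1 ≤ j ≤ n (i.e., the quotient gcd(L_{k−1,k−1}, L_{k,k−1})/gcd(L_{k−1,k−1}, L_{k,k−1}, L_{k−2,k−2}) divides every entry of the k-th row of U); and (ii) gcd(U_{k−1,k−1}, U_{k−1,k}) divides gcd(U_{k−1,k−1}, U_{k−1,k}, U_{k−2,k−2}) · L_{j,k} for every j with 1 ≤ j ≤ n. -/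

import Mathlib

open Finset in
lemma sum_fin_truncate {M : Type*} [AddCommMonoid M] {n k : ℕ} (hkn : k ≤ n)
    (f : Fin n → M) (hf : ∀ s : Fin n, k ≤ (s : ℕ) → f s = 0) :
    ∑ s : Fin n, f s = ∑ t : Fin k, f ⟨t.1, lt_of_lt_of_le t.isLt hkn⟩ := by
  classical
  set f' : ℕ → M := fun i => if h : i < n then f ⟨i, h⟩ else 0 with hf'
  have h1 : ∑ s : Fin n, f s = ∑ i ∈ range n, f' i := by
    rw [← Fin.sum_univ_eq_sum_range]
    exact Finset.sum_congr rfl fun s _ => by simp [hf', s.isLt]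
  have h2 : ∑ t : Fin k, f ⟨t.1, lt_of_lt_of_le t.isLt hkn⟩ = ∑ i ∈ range k, f' i := by
    rw [← Fin.sum_univ_eq_sum_range]
    refine Finset.sum_congr rfl fun t _ => by simp [hf', lt_of_lt_of_le t.isLt hkn]
  rw [h1, h2]
  refine (Finset.sum_subset (Finset.range_subset_range.mpr hkn) fun x hx hxk => ?_).symm
  simp only [mem_range] at hx hxk
  simp only [hf', dif_pos hx]
  exact hf ⟨x, hx⟩ (le_of_not_gt hxk)

lemma dvd_det_of_dvd_column {R : Type*} [CommRing R] {m : ℕ}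
    (M : Matrix (Fin m) (Fin m) R) (c : Fin m) (g : R) (h : ∀ i, g ∣ M i c) :
    g ∣ M.det := by
  classical
  choose v hv using h
  have h1 : M = M.updateCol c (g • v) := by
    have : (g • v) = fun i => M i c := funext fun i => by
      simp [Pi.smul_apply, smul_eq_mul, (hv i).symm]
    rw [this, Matrix.updateCol_eq_self]
  rw [h1, Matrix.det_updateCol_smul]
  exact Dvd.intro _ rfl

lemma gcd_endgame {D : Type*} [CommRing D] [IsDomain D] [GCDMonoid D]
    (x y q u : D) (h : gcd x y ∣ q * u) :
    gcd x y ∣ gcd x (gcd y q) * u := by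
  have h1 : gcd x y ∣ x * u := (gcd_dvd_left x y).mul_right u
  have h2 : gcd x y ∣ y * u := (gcd_dvd_right x y).mul_right u
  have h4 : gcd x y ∣ gcd y q * u :=
    (dvd_gcd h2 h).trans (gcd_mul_right' u y q).dvd
  exact (dvd_gcd h1 h4).trans (gcd_mul_right' u x (gcd y q)).dvd



/-- The diagonal matrix `D_g = diag(p₁, p₁p₂, p₂p₃, …, p_{n−1}p_n)` built from the
pivots `p : Fin n → D`. -/
def bareissDiag {D : Type*} [CommRing D] {n : ℕ} (p : Fin n → D) :
    Matrix (Fin n) (Fin n) D :=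
  Matrix.diagonal fun i =>
    (if (i : ℕ) = 0 then 1
      else p ⟨(i : ℕ) - 1, lt_of_le_of_lt (Nat.sub_le _ _) i.isLt⟩) * p i

/-- (Theorem 9 of the paper.)  Let `A = L · D_g⁻¹ · U` be a
permutation-free `L D⁻¹ U` decomposition over a GCD domain `D`.  Here `k` is
1-indexed with `2 ≤ k ≤ n − 1`, and the matrix entries are 0-indexed, so e.g. the
paper's `L_{k−1,k−1}` is `L ⟨k-2,_⟩ ⟨k-2,_⟩`; the convention `L_{0,0} = U_{0,0} = 1`
for `k = 2` is realised by the `if k = 2 then 1 else …`.  Then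
`gcd(L_{k−1,k−1}, L_{k,k−1})` divides
`gcd(L_{k−1,k−1}, L_{k,k−1}, L_{k−2,k−2}) * U_{k,j}` for every `j`, and symmetrically
`gcd(U_{k−1,k−1}, U_{k−1,k})` divides
`gcd(U_{k−1,k−1}, U_{k−1,k}, U_{k−2,k−2}) * L_{j,k}` for every `j`. -/
lemma hite_aux {D K : Type*} [CommRing D] [Field K] [Algebra D K] {n k : ℕ}
    (hk2 : k ≥ 2) (hkn : k ≤ n - 1) (L : Matrix (Fin n) (Fin n) D) (r : ℕ → K)
    (hr : r = fun t => if h : t < n then algebraMap D K (L ⟨t, h⟩ ⟨t, h⟩) else 1)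
    (q : D) (hq : q = (if k = 2 then 1 else L ⟨k - 3, by omega⟩ ⟨k - 3, by omega⟩)) :
    (if k - 2 = 0 then (1 : K) else r (k - 2 - 1)) = algebraMap D K q := by
  rw [hq]
  by_cases hk : k = 2
  · rw [if_pos (show k - 2 = 0 from by omega), if_pos hk, map_one]
  · rw [if_neg (show ¬(k - 2 = 0) from by omega), if_neg hk,
      show k - 2 - 1 = k - 3 from by omega]
    simp only [hr]
    rw [dif_pos (show k - 3 < n by omega)]

set_option maxHeartbeats 2000000 in
theorem main_aux {D K : Type*} [CommRing D] [IsDomain D] [GCDMonoid D] [Field K]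
    [Algebra D K] [IsFractionRing D K] {n : ℕ} (A L U : Matrix (Fin n) (Fin n) D)
    (hL : ∀ i j : Fin n, (i : ℕ) < (j : ℕ) → L i j = 0)
    (hU : ∀ i j : Fin n, (j : ℕ) < (i : ℕ) → U i j = 0)
    (hdiag : ∀ i : Fin n, U i i = L i i)
    (hp : ∀ i : Fin n, L i i ≠ 0)
    (hA : A.map (algebraMap D K) =
      L.map (algebraMap D K) *
        ((bareissDiag fun i : Fin n => L i i).map (algebraMap D K))⁻¹ *
        U.map (algebraMap D K))
    (k : ℕ) (hk2 : k ≥ 2) (hkn : k ≤ n - 1) (j : Fin n) :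
    gcd (L ⟨k - 2, by omega⟩ ⟨k - 2, by omega⟩) (L ⟨k - 1, by omega⟩ ⟨k - 2, by omega⟩) ∣
      (if k = 2 then 1 else L ⟨k - 3, by omega⟩ ⟨k - 3, by omega⟩) * U ⟨k - 1, by omega⟩ j := by
  classical
  have hn : k < n := by omega
  set φ := algebraMap D K with hφdef
  have hφ : Function.Injective φ := IsFractionRing.injective D K
  -- the diagonal entries of the Bareiss diagonal matrix
  set dd : Fin n → D := fun i =>
    (if (i : ℕ) = 0 then 1
      else L ⟨(i : ℕ) - 1, lt_of_le_of_lt (Nat.sub_le _ _) i.isLt⟩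
        ⟨(i : ℕ) - 1, lt_of_le_of_lt (Nat.sub_le _ _) i.isLt⟩) * L i i with hdd
  have hbd : (bareissDiag fun i : Fin n => L i i) = Matrix.diagonal dd := rfl
  have hdd0 : ∀ i, dd i ≠ 0 := by
    intro i
    refine mul_ne_zero ?_ (hp i)
    split
    · exact one_ne_zero
    · exact hp _
  have hφne : ∀ x : D, x ≠ 0 → φ x ≠ 0 := fun x hx => by
    simpa using (map_ne_zero_iff φ hφ).mpr hx
  -- the inverse of the diagonal matrix
  have hDinv : ((bareissDiag fun i : Fin n => L i i).map φ)⁻¹ =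
      Matrix.diagonal (fun i => (φ (dd i))⁻¹) := by
    apply Matrix.inv_eq_right_inv
    rw [hbd, Matrix.diagonal_map (map_zero φ), Matrix.diagonal_mul_diagonal]
    have : (fun i => φ (dd i) * (φ (dd i))⁻¹) = fun _ => (1 : K) := by
      funext i; exact mul_inv_cancel₀ (hφne _ (hdd0 i))
    rw [this, Matrix.diagonal_one]
  set ι : Fin k → Fin n := fun t => ⟨t.1, lt_trans t.isLt hn⟩ with hι
  -- entrywise expansion of A
  have keyA : ∀ (i : Fin k) (c : Fin n),
      φ (A (ι i) c) = ∑ s : Fin k, φ (L (ι i) (ι s)) * (φ (dd (ι s)))⁻¹ * φ (U (ι s) c) := by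
    intro i c
    have h0 : φ (A (ι i) c) = ∑ s : Fin n, φ (L (ι i) s) * (φ (dd s))⁻¹ * φ (U s c) := by
      have h1 : (A.map φ) (ι i) c =
          ((L.map φ * Matrix.diagonal (fun i => (φ (dd i))⁻¹)) * U.map φ) (ι i) c := by
        rw [hA, hDinv]
      rw [Matrix.mul_apply] at h1
      simp only [Matrix.mul_diagonal, Matrix.map_apply] at h1
      exact h1
    rw [h0]
    refine sum_fin_truncate (le_of_lt hn) _ fun s hs => ?_
    have : L (ι i) s = 0 := hL _ _ (by simp [hι]; omega)
    simp [this]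
  -- distinguished indices
  obtain ⟨a, ha⟩ : ∃ a : Fin n, a = ⟨k - 2, by omega⟩ := ⟨_, rfl⟩
  obtain ⟨b, hb⟩ : ∃ b : Fin n, b = ⟨k - 1, by omega⟩ := ⟨_, rfl⟩
  obtain ⟨a', ha'⟩ : ∃ a' : Fin k, a' = ⟨k - 2, by omega⟩ := ⟨_, rfl⟩
  obtain ⟨q, hq⟩ : ∃ q : D, q = (if k = 2 then 1 else L ⟨k - 3, by omega⟩ ⟨k - 3, by omega⟩) :=
    ⟨_, rfl⟩
  -- the bordered matrix over D, and the two triangular factors over K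
  obtain ⟨E, hE⟩ : ∃ E : Matrix (Fin k) (Fin k) D, E = fun i t =>
    (if t.1 < k - 2 then A (ι i) (ι t)
    else if t.1 = k - 2 then L (ι i) a
    else A (ι i) j) := ⟨_, rfl⟩
  obtain ⟨P, hP⟩ : ∃ P : Matrix (Fin k) (Fin k) K, P = fun i s =>
    φ (L (ι i) (ι s)) * (φ (dd (ι s)))⁻¹ := ⟨_, rfl⟩
  obtain ⟨F, hF⟩ : ∃ F : Matrix (Fin k) (Fin k) K, F = fun s t =>
    (if t.1 < k - 2 then φ (U (ι s) (ι t))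
    else if t.1 = k - 2 then (if s.1 = k - 2 then φ (dd a) else 0)
    else φ (U (ι s) j)) := ⟨_, rfl⟩
  have hιa : ι a' = a := by rw [ha', ha]
  -- the factorization E.map φ = P * F
  have hEPF : E.map φ = P * F := by
    funext i t
    rw [Matrix.map_apply, Matrix.mul_apply]
    by_cases ht1 : t.1 < k - 2
    · simp only [hE, hF, hP, if_pos ht1]
      exact keyA i (ι t)
    · by_cases ht2 : t.1 = k - 2
      · simp only [hE, hF, hP, if_neg ht1, if_pos ht2]
        rw [Finset.sum_eq_single a']
        · rw [if_pos (show a'.1 = k - 2 from by rw [ha']), hιa,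
            mul_assoc, inv_mul_cancel₀ (hφne _ (hdd0 a)), mul_one]
        · intro s _ hs
          rw [if_neg (show ¬ s.1 = k - 2 from fun h => hs (by rw [ha']; exact Fin.ext h)), mul_zero]
        · intro h; exact absurd (Finset.mem_univ a') h
      · simp only [hE, hF, hP, if_neg ht1, if_neg ht2]
        exact keyA i j
  -- determinants of the triangular factors
  have hdetP : P.det = ∏ i : Fin k, P i i := by
    have hPtri : P.BlockTriangular OrderDual.toDual := by
      intro i s his
      have h1 : (i : ℕ) < (s : ℕ) := his
      simp only [hP]
      rw [hL (ι i) (ι s) (by simpa [hι] using h1), map_zero, zero_mul]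
    rw [Matrix.det_of_lowerTriangular P hPtri]
  have hdetF : F.det = ∏ s : Fin k, F s s := by
    apply Matrix.det_of_upperTriangular
    intro s t hts
    have h1 : (t : ℕ) < (s : ℕ) := hts
    simp only [hF]
    by_cases ht1 : t.1 < k - 2
    · rw [if_pos ht1, hU (ι s) (ι t) (by simpa [hι] using h1), map_zero]
    · by_cases ht2 : t.1 = k - 2
      · rw [if_neg ht1, if_pos ht2, if_neg (by omega)]
      · exfalso
        have : (t : ℕ) < k := t.isLt
        have : (s : ℕ) < k := s.isLt
        omega
  have hdet : φ E.det = P.det * F.det := by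
    rw [RingHom.map_det, RingHom.mapMatrix_apply, hEPF, Matrix.det_mul]
  -- the diagonal entries as a function of natural numbers
  obtain ⟨r, hr⟩ : ∃ r : ℕ → K, r = fun t => if h : t < n then φ (L ⟨t, h⟩ ⟨t, h⟩) else 1 :=
    ⟨_, rfl⟩
  have hr0 : ∀ t, r t ≠ 0 := by
    intro t
    simp only [hr]
    split
    · exact hφne _ (hp _)
    · exact one_ne_zero
  have hhelp : ∀ (α β u : K), α ≠ 0 → α * (β * α)⁻¹ * u = β⁻¹ * u := by
    intro α β u hα
    rw [mul_inv, show α * (β⁻¹ * α⁻¹) = β⁻¹ * (α * α⁻¹) by ring,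
      mul_inv_cancel₀ hα, mul_one]
  obtain ⟨G, hG⟩ : ∃ G : ℕ → K, G = fun m =>
    (if m < k - 2 then (if m = 0 then 1 else r (m - 1))⁻¹ * r m
    else if m = k - 2 then r (k - 2)
    else φ (U b j) * (r (k - 2))⁻¹) := ⟨_, rfl⟩
  have hφdd : ∀ i : Fin k, φ (dd (ι i)) = (if i.1 = 0 then 1 else r (i.1 - 1)) * r i.1 := by
    intro i
    simp only [hdd, map_mul, apply_ite φ, map_one, hr]
    congr 1
    · split
      · rfl
      · rw [dif_pos (show i.1 - 1 < n by omega)]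
    · rw [dif_pos (show i.1 < n by omega)]
  have hrι : ∀ i : Fin k, φ (L (ι i) (ι i)) = r i.1 := by
    intro i
    simp only [hr]
    rw [dif_pos (show i.1 < n by omega)]
  have hPF : ∀ i : Fin k, P i i * F i i = G i.1 := by
    intro i
    simp only [hP, hF, hG]
    by_cases h1 : i.1 < k - 2
    · rw [if_pos h1, if_pos h1, hdiag (ι i), hφdd i, hrι i]
      rw [hhelp _ _ _ (hr0 i.1)]
    · by_cases h2 : i.1 = k - 2
      · rw [if_neg h1, if_neg h1, if_pos h2, if_pos h2, if_pos h2]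
        have hia : ι i = a := by rw [ha]; exact Fin.ext h2
        rw [hia, mul_assoc, inv_mul_cancel₀ (hφne _ (hdd0 a)), mul_one]
        rw [ha, show φ (L (⟨k - 2, by omega⟩ : Fin n) ⟨k - 2, by omega⟩) = r (k - 2) from by
          simp only [hr]; rw [dif_pos (show k - 2 < n by omega)]]
      · have h3 : i.1 = k - 1 := by have := i.isLt; omega
        rw [if_neg h1, if_neg h1, if_neg h2, if_neg h2]
        have hib : ι i = b := by rw [hb]; exact Fin.ext h3
        rw [hφdd i, hrι i, if_neg (show ¬ i.1 = 0 by omega), hib]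
        rw [show i.1 - 1 = k - 2 by omega]
        rw [hhelp _ _ _ (hr0 i.1)]
        ring
  -- telescoping product
  have htel : ∀ m, m ≤ k - 2 → ∏ i ∈ Finset.range m, G i = if m = 0 then 1 else r (m - 1) := by
    intro m
    induction m with
    | zero => simp
    | succ m ih =>
      intro hm
      rw [Finset.prod_range_succ, ih (by omega)]
      have hmlt : m < k - 2 := by omega
      rw [show G m = (if m = 0 then 1 else r (m - 1))⁻¹ * r m from by
        simp only [hG]; rw [if_pos hmlt]]
      by_cases hm0 : m = 0
      · subst hm0; simp
      · rw [if_neg hm0, if_neg (Nat.succ_ne_zero m)]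
        rw [← mul_assoc, mul_inv_cancel₀ (hr0 _), one_mul, Nat.add_sub_cancel]
  have hprodG : ∏ m ∈ Finset.range k, G m =
      (∏ m ∈ Finset.range (k - 2), G m) * G (k - 2) * G (k - 1) := by
    have e1 : k = (k - 2) + 1 + 1 := by omega
    calc ∏ m ∈ Finset.range k, G m = ∏ m ∈ Finset.range ((k - 2) + 1 + 1), G m := by rw [← e1]
      _ = (∏ m ∈ Finset.range ((k - 2) + 1), G m) * G ((k - 2) + 1) := Finset.prod_range_succ _ _
      _ = (∏ m ∈ Finset.range (k - 2), G m) * G (k - 2) * G ((k - 2) + 1) := by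
          rw [Finset.prod_range_succ]
      _ = (∏ m ∈ Finset.range (k - 2), G m) * G (k - 2) * G (k - 1) := by
          rw [show (k - 2) + 1 = k - 1 from by omega]
  -- assembling the scalar identity
  have hGk2 : G (k - 2) = r (k - 2) := by
    simp only [hG]
    rw [if_neg (show ¬(k - 2 < k - 2) from by omega)]
    simp
  have hGk1 : G (k - 1) = φ (U b j) * (r (k - 2))⁻¹ := by
    simp only [hG]
    rw [if_neg (show ¬(k - 1 < k - 2) from by omega), if_neg (show ¬(k - 1 = k - 2) from by omega)]
  have hite : (if k - 2 = 0 then (1 : K) else r (k - 2 - 1)) = φ q :=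
    hite_aux hk2 hkn L r hr q hq
  have hscal : P.det * F.det = φ q * φ (U b j) := by
    calc P.det * F.det = ∏ i : Fin k, (P i i * F i i) := by
          rw [hdetP, hdetF, Finset.prod_mul_distrib]
      _ = ∏ m ∈ Finset.range k, G m := by
          rw [← Fin.prod_univ_eq_prod_range]
          exact Finset.prod_congr rfl fun i _ => hPF i
      _ = (if k - 2 = 0 then 1 else r (k - 2 - 1)) * r (k - 2) *
            (φ (U b j) * (r (k - 2))⁻¹) := by
          rw [hprodG, htel (k - 2) le_rfl, hGk2, hGk1]
      _ = (if k - 2 = 0 then 1 else r (k - 2 - 1)) * φ (U b j) *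
            (r (k - 2) * (r (k - 2))⁻¹) := by ring
      _ = φ q * φ (U b j) := by
          rw [mul_inv_cancel₀ (hr0 _), mul_one, hite]
  have hdetE : E.det = q * U b j := by
    apply hφ
    rw [hdet, hscal, map_mul]
  -- the gcd divides every entry of column a' of E
  have hιv : ∀ t : Fin k, ((ι t : Fin n) : ℕ) = t.1 := fun _ => rfl
  have hav : (a : ℕ) = k - 2 := by rw [ha]
  have hbv : (b : ℕ) = k - 1 := by rw [hb]
  have ha'v : (a' : ℕ) = k - 2 := by rw [ha']
  have hcol : ∀ i : Fin k, gcd (L a a) (L b a) ∣ E i a' := by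
    intro i
    have hEa : E i a' = L (ι i) a := by
      simp only [hE]
      rw [if_neg (show ¬((a' : ℕ) < k - 2) from by omega), if_pos ha'v]
    rw [hEa]
    have := i.isLt
    rcases show i.1 < k - 2 ∨ i.1 = k - 2 ∨ i.1 = k - 1 from by omega with h | h | h
    · rw [hL (ι i) a (by rw [hιv i, hav]; exact h)]
      exact dvd_zero _
    · rw [show ι i = a from by rw [ha]; exact Fin.ext h]
      exact gcd_dvd_left _ _
    · rw [show ι i = b from by rw [hb]; exact Fin.ext h]
      exact gcd_dvd_right _ _
  have hdvd : gcd (L a a) (L b a) ∣ E.det := dvd_det_of_dvd_column E a' _ hcol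
  rw [hdetE] at hdvd
  rw [ha, hb, hq] at hdvd
  exact hdvd

open Matrix in
set_option maxHeartbeats 1000000 in
theorem stmt6 {D K : Type*} [CommRing D] [IsDomain D] [GCDMonoid D] [Field K]
    [Algebra D K] [IsFractionRing D K] {n : ℕ} (A L U : Matrix (Fin n) (Fin n) D)
    (hL : ∀ i j : Fin n, (i : ℕ) < (j : ℕ) → L i j = 0)
    (hU : ∀ i j : Fin n, (j : ℕ) < (i : ℕ) → U i j = 0)
    (hdiag : ∀ i : Fin n, U i i = L i i)
    (hp : ∀ i : Fin n, L i i ≠ 0)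
    (hA : A.map (algebraMap D K) =
      L.map (algebraMap D K) *
        ((bareissDiag fun i : Fin n => L i i).map (algebraMap D K))⁻¹ *
        U.map (algebraMap D K))
    (k : ℕ) (hk2 : 2 ≤ k) (hkn : k ≤ n - 1) :
    (∀ j : Fin n,
      gcd (L ⟨k - 2, by omega⟩ ⟨k - 2, by omega⟩) (L ⟨k - 1, by omega⟩ ⟨k - 2, by omega⟩) ∣
        gcd (L ⟨k - 2, by omega⟩ ⟨k - 2, by omega⟩)
            (gcd (L ⟨k - 1, by omega⟩ ⟨k - 2, by omega⟩)
              (if k = 2 then 1 else L ⟨k - 3, by omega⟩ ⟨k - 3, by omega⟩)) *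
          U ⟨k - 1, by omega⟩ j) ∧
    (∀ j : Fin n,
      gcd (U ⟨k - 2, by omega⟩ ⟨k - 2, by omega⟩) (U ⟨k - 2, by omega⟩ ⟨k - 1, by omega⟩) ∣
        gcd (U ⟨k - 2, by omega⟩ ⟨k - 2, by omega⟩)
            (gcd (U ⟨k - 2, by omega⟩ ⟨k - 1, by omega⟩)
              (if k = 2 then 1 else U ⟨k - 3, by omega⟩ ⟨k - 3, by omega⟩)) *
          L j ⟨k - 1, by omega⟩) := by
  have hL' : ∀ i j : Fin n, (i : ℕ) < (j : ℕ) → Uᵀ i j = 0 := fun i j h => hU j i h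
  have hU' : ∀ i j : Fin n, (j : ℕ) < (i : ℕ) → Lᵀ i j = 0 := fun i j h => hL j i h
  have hdiag' : ∀ i : Fin n, Lᵀ i i = Uᵀ i i := fun i => (hdiag i).symm
  have hp' : ∀ i : Fin n, Uᵀ i i ≠ 0 := fun i => by
    show U i i ≠ 0
    rw [hdiag i]; exact hp i
  have hdfun : (fun i : Fin n => Uᵀ i i) = fun i => L i i := funext fun i => hdiag i
  have hA' : Aᵀ.map (algebraMap D K) =
      Uᵀ.map (algebraMap D K) *
        ((bareissDiag fun i : Fin n => Uᵀ i i).map (algebraMap D K))⁻¹ *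
        Lᵀ.map (algebraMap D K) := by
    rw [hdfun]
    have h1 := congrArg Matrix.transpose hA
    rw [Matrix.transpose_mul, Matrix.transpose_mul, Matrix.transpose_nonsing_inv] at h1
    rw [← Matrix.transpose_map, ← Matrix.transpose_map, ← Matrix.transpose_map,
      ← Matrix.transpose_map] at h1
    have h2 : (bareissDiag fun i : Fin n => L i i)ᵀ = bareissDiag fun i : Fin n => L i i :=
      Matrix.diagonal_transpose _
    rw [h2] at h1
    rw [h1, mul_assoc]
  constructor
  · intro j
    exact gcd_endgame _ _ _ _ (main_aux A L U hL hU hdiag hp hA k hk2 hkn j)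
  · intro j
    have h2 := main_aux Aᵀ Uᵀ Lᵀ hL' hU' hdiag' hp' hA' k hk2 hkn j
    exact gcd_endgame _ _ _ _ h2
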